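/- Let f : (0,∞) → ℝ be a convex function with f(1) = 0 such that the function g : (0,∞) → ℝ defined by g(t) = −t·f(t) is also convex. Let P and Q be probability mass functions on a common finite nonempty set A, with P and Q strictly positive on A. Then (min_{a ∈ A} P(a)/Q(a))·D_f(P‖Q) ≤ −D_g(P‖Q) − f(1 + χ²(P,Q)) ≤ (max_{a ∈ A} P(a)/Q(a))·D_f(P‖Q), where D_f(P‖Q) = Σ_{a ∈ A} Q(a)·f(P(a)/Q(a)) is the f-divergence and χ²(P,Q) = Σ_{a ∈ A} (P(a) − Q(a))²/Q(a). -/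

import Mathlib

open Finset

private lemma sum_mul_pos_aux {A : Type*} [Fintype A] (w r : A → ℝ)
    (hw : ∀ a, 0 ≤ w a) (hsum : ∑ a, w a = 1) (hr : ∀ a, 0 < r a) :
    0 < ∑ a, w a * r a := by
  obtain ⟨a, ha⟩ : ∃ a, 0 < w a := by
    by_contra h
    push_neg at h
    have : ∑ a, w a = 0 :=
      Finset.sum_eq_zero fun a _ => le_antisymm (h a) (hw a)
    simp [this] at hsum
  calc (0:ℝ) < w a * r a := mul_pos ha (hr a)
    _ ≤ ∑ a, w a * r a :=
      Finset.single_le_sum (fun b _ => mul_nonneg (hw b) (hr b).le) (mem_univ a)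

private lemma jensen_lower {A : Type*} [Fintype A]
    (f : ℝ → ℝ) (hf : ConvexOn ℝ (Set.Ioi (0 : ℝ)) f) (hf1 : f 1 = 0)
    (P Q : A → ℝ) (hP : ∀ a, 0 < P a) (hPsum : ∑ a, P a = 1)
    (hQ : ∀ a, 0 < Q a) (hQsum : ∑ a, Q a = 1)
    (c : ℝ) (hc0 : 0 < c) (hc : ∀ a, c * Q a ≤ P a) :
    c * ∑ a, Q a * f (P a / Q a) ≤
      ∑ a, P a * f (P a / Q a) - f (∑ a, P a * (P a / Q a)) := by
  have hr : ∀ a, 0 < P a / Q a := fun a => div_pos (hP a) (hQ a)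
  have hQr : ∀ a, Q a * (P a / Q a) = P a := fun a =>
    mul_div_cancel₀ _ (hQ a).ne'
  have hc1 : c ≤ 1 := by
    have : ∑ a, c * Q a ≤ ∑ a, P a := Finset.sum_le_sum fun a _ => hc a
    rwa [← Finset.mul_sum, hQsum, hPsum, mul_one] at this
  rcases eq_or_lt_of_le hc1 with hceq | hclt
  · -- c = 1 : then P = Q
    have hPQ : ∀ a, P a = Q a := by
      intro a
      have hle : ∀ a ∈ (univ : Finset A), Q a ≤ P a := by
        intro a _
        have := hc a
        rw [hceq, one_mul] at this
        exact this
      have hsum : ∑ a, Q a = ∑ a, P a := by rw [hQsum, hPsum]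
      exact ((Finset.sum_eq_sum_iff_of_le hle).mp hsum a (mem_univ a)).symm
    have hr1 : ∀ a, P a / Q a = 1 := fun a => by
      rw [hPQ a, div_self (hQ a).ne']
    simp only [hr1, hf1, mul_zero, mul_one, Finset.sum_const_zero, hPsum]
    simp [hf1]
  · -- c < 1
    set s := ∑ a, P a * (P a / Q a) with hs_def
    set w : A → ℝ := fun a => (P a - c * Q a) / (1 - c) with hw_def
    have h1c : (0:ℝ) < 1 - c := by linarith
    have hw0 : ∀ a, 0 ≤ w a := fun a =>
      div_nonneg (by linarith [hc a]) h1c.le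
    have hwsum : ∑ a, w a = 1 := by
      simp only [hw_def]
      rw [← Finset.sum_div, Finset.sum_sub_distrib, ← Finset.mul_sum, hPsum, hQsum,
        mul_one, div_self h1c.ne']
    have hjensen := hf.map_sum_le (t := univ) (w := w) (p := fun a => P a / Q a)
      (fun a _ => hw0 a) hwsum (fun a _ => hr a)
    simp only [smul_eq_mul] at hjensen
    set u := ∑ a, w a * (P a / Q a) with hu_def
    have hu_pos : 0 < u := sum_mul_pos_aux w _ hw0 hwsum hr
    have hu_eq : u = (s - c) / (1 - c) := by
      have key : ∀ a, w a * (P a / Q a) = (P a * (P a / Q a) - c * P a) / (1 - c) := by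
        intro a
        rw [hw_def]
        rw [div_mul_eq_mul_div, sub_mul, mul_assoc, hQr]
      rw [hu_def, hs_def]
      simp only [key]
      rw [← Finset.sum_div, Finset.sum_sub_distrib, ← Finset.mul_sum, hPsum, mul_one]
    have hwf : ∑ a, w a * f (P a / Q a) =
        (∑ a, P a * f (P a / Q a) - c * ∑ a, Q a * f (P a / Q a)) / (1 - c) := by
      have key : ∀ a, w a * f (P a / Q a) =
          (P a * f (P a / Q a) - c * (Q a * f (P a / Q a))) / (1 - c) := by
        intro a
        rw [hw_def, div_mul_eq_mul_div, sub_mul, mul_assoc]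
      simp only [key]
      rw [← Finset.sum_div, Finset.sum_sub_distrib, ← Finset.mul_sum]
    have hcomb : s = (1 - c) * u + c * 1 := by
      rw [hu_eq]
      field_simp
      ring
    have hconv := hf.2 (Set.mem_Ioi.mpr hu_pos) (Set.mem_Ioi.mpr one_pos)
      h1c.le hc0.le (by ring)
    simp only [smul_eq_mul, hf1, mul_zero, add_zero] at hconv
    rw [← hcomb] at hconv
    have hfin : f s ≤ (1 - c) * ∑ a, w a * f (P a / Q a) :=
      hconv.trans (mul_le_mul_of_nonneg_left hjensen h1c.le)
    rw [hwf, mul_div_cancel₀ _ h1c.ne'] at hfin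
    linarith

private lemma jensen_upper {A : Type*} [Fintype A] [Nonempty A]
    (f : ℝ → ℝ) (hf : ConvexOn ℝ (Set.Ioi (0 : ℝ)) f) (hf1 : f 1 = 0)
    (P Q : A → ℝ) (hP : ∀ a, 0 < P a) (hPsum : ∑ a, P a = 1)
    (hQ : ∀ a, 0 < Q a) (hQsum : ∑ a, Q a = 1)
    (C : ℝ) (hC : ∀ a, P a ≤ C * Q a) :
    ∑ a, P a * f (P a / Q a) - f (∑ a, P a * (P a / Q a)) ≤
      C * ∑ a, Q a * f (P a / Q a) := by
  have hr : ∀ a, 0 < P a / Q a := fun a => div_pos (hP a) (hQ a)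
  have hQr : ∀ a, Q a * (P a / Q a) = P a := fun a =>
    mul_div_cancel₀ _ (hQ a).ne'
  have hC1 : 1 ≤ C := by
    have : ∑ a, P a ≤ ∑ a, C * Q a := Finset.sum_le_sum fun a _ => hC a
    rwa [← Finset.mul_sum, hQsum, hPsum, mul_one] at this
  rcases eq_or_lt_of_le hC1 with hCeq | hClt
  · -- C = 1 : then P = Q
    have hPQ : ∀ a, P a = Q a := by
      intro a
      have hle : ∀ a ∈ (univ : Finset A), P a ≤ Q a := by
        intro a _
        have := hC a
        rw [← hCeq, one_mul] at this
        exact this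
      have hsum : ∑ a, P a = ∑ a, Q a := by rw [hQsum, hPsum]
      exact (Finset.sum_eq_sum_iff_of_le hle).mp hsum a (mem_univ a)
    have hr1 : ∀ a, P a / Q a = 1 := fun a => by
      rw [hPQ a, div_self (hQ a).ne']
    simp only [hr1, hf1, mul_zero, mul_one, Finset.sum_const_zero, hPsum]
    simp [hf1]
  · -- C > 1
    set s := ∑ a, P a * (P a / Q a) with hs_def
    have hs_pos : 0 < s := by
      apply Finset.sum_pos (fun a _ => mul_pos (hP a) (hr a))
      exact ⟨Classical.arbitrary A, mem_univ _⟩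
    have hC0 : (0:ℝ) < C := by linarith
    set w : A → ℝ := fun a => (C * Q a - P a) / (C - 1) with hw_def
    have hC1' : (0:ℝ) < C - 1 := by linarith
    have hw0 : ∀ a, 0 ≤ w a := fun a =>
      div_nonneg (by linarith [hC a]) hC1'.le
    have hwsum : ∑ a, w a = 1 := by
      simp only [hw_def]
      rw [← Finset.sum_div, Finset.sum_sub_distrib, ← Finset.mul_sum, hPsum, hQsum,
        mul_one, div_self hC1'.ne']
    have hjensen := hf.map_sum_le (t := univ) (w := w) (p := fun a => P a / Q a)
      (fun a _ => hw0 a) hwsum (fun a _ => hr a)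
    simp only [smul_eq_mul] at hjensen
    set u := ∑ a, w a * (P a / Q a) with hu_def
    have hu_pos : 0 < u := sum_mul_pos_aux w _ hw0 hwsum hr
    have hu_eq : u = (C - s) / (C - 1) := by
      have key : ∀ a, w a * (P a / Q a) = (C * P a - P a * (P a / Q a)) / (C - 1) := by
        intro a
        rw [hw_def]
        rw [div_mul_eq_mul_div, sub_mul, mul_assoc, hQr]
      rw [hu_def, hs_def]
      simp only [key]
      rw [← Finset.sum_div, Finset.sum_sub_distrib, ← Finset.mul_sum, hPsum, mul_one]
    have hwf : ∑ a, w a * f (P a / Q a) =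
        (C * ∑ a, Q a * f (P a / Q a) - ∑ a, P a * f (P a / Q a)) / (C - 1) := by
      have key : ∀ a, w a * f (P a / Q a) =
          (C * (Q a * f (P a / Q a)) - P a * f (P a / Q a)) / (C - 1) := by
        intro a
        rw [hw_def, div_mul_eq_mul_div, sub_mul, mul_assoc]
      simp only [key]
      rw [← Finset.sum_div, Finset.sum_sub_distrib, ← Finset.mul_sum]
    -- convexity at 1 = (1/C) * s + ((C-1)/C) * u
    have hcomb : (1:ℝ) = (1/C) * s + ((C-1)/C) * u := by
      rw [hu_eq]
      field_simp
      ring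
    have hconv := hf.2 (Set.mem_Ioi.mpr hs_pos) (Set.mem_Ioi.mpr hu_pos)
      (by positivity : (0:ℝ) ≤ 1/C) (div_nonneg hC1'.le hC0.le)
      (by field_simp; ring)
    simp only [smul_eq_mul] at hconv
    rw [← hcomb, hf1] at hconv
    have hfu : u ∈ Set.Ioi (0:ℝ) := hu_pos
    have h1 : 0 ≤ (1/C) * f s + ((C-1)/C) * f u := hconv
    have h2 : f u ≤ (C * ∑ a, Q a * f (P a / Q a) - ∑ a, P a * f (P a / Q a)) / (C - 1) := by
      rw [← hwf]; exact hjensen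
    have h3 : 0 ≤ f s + (C - 1) * f u := by
      have := mul_le_mul_of_nonneg_left h1 hC0.le
      rw [mul_zero] at this
      calc (0:ℝ) ≤ C * ((1/C) * f s + ((C-1)/C) * f u) := by linarith [h1, hC0]
        _ = f s + (C - 1) * f u := by field_simp
    have h4 : (C - 1) * f u ≤ C * ∑ a, Q a * f (P a / Q a) - ∑ a, P a * f (P a / Q a) := by
      have := mul_le_mul_of_nonneg_left h2 hC1'.le
      rwa [mul_div_cancel₀ _ hC1'.ne'] at this
    linarith

theorem f_divergence_jensen_refinement {A : Type*} [Fintype A] [Nonempty A]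
    (f g : ℝ → ℝ) (hf : ConvexOn ℝ (Set.Ioi (0 : ℝ)) f) (hf1 : f 1 = 0)
    (hg_def : ∀ t > (0 : ℝ), g t = -t * f t) (hg : ConvexOn ℝ (Set.Ioi (0 : ℝ)) g)
    (P Q : A → ℝ) (hP : ∀ a, 0 < P a) (hPsum : ∑ a, P a = 1)
    (hQ : ∀ a, 0 < Q a) (hQsum : ∑ a, Q a = 1) :
    (⨅ a, P a / Q a) * ∑ a, Q a * f (P a / Q a) ≤
        -(∑ a, Q a * g (P a / Q a)) - f (1 + ∑ a, (P a - Q a) ^ 2 / Q a) ∧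
      -(∑ a, Q a * g (P a / Q a)) - f (1 + ∑ a, (P a - Q a) ^ 2 / Q a) ≤
        (⨆ a, P a / Q a) * ∑ a, Q a * f (P a / Q a) := by
  have hr : ∀ a, 0 < P a / Q a := fun a => div_pos (hP a) (hQ a)
  have hQr : ∀ a, Q a * (P a / Q a) = P a := fun a =>
    mul_div_cancel₀ _ (hQ a).ne'
  -- rewrite the g-sum
  have hg_sum : -(∑ a, Q a * g (P a / Q a)) = ∑ a, P a * f (P a / Q a) := by
    rw [← Finset.sum_neg_distrib]
    apply Finset.sum_congr rfl
    intro a _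
    rw [hg_def _ (hr a)]
    rw [neg_mul, mul_neg, neg_neg, ← mul_assoc, hQr]
  -- rewrite the chi-squared term
  have hchi : 1 + ∑ a, (P a - Q a) ^ 2 / Q a = ∑ a, P a * (P a / Q a) := by
    have key : ∀ a, (P a - Q a) ^ 2 / Q a = P a * (P a / Q a) - 2 * P a + Q a := by
      intro a
      field_simp [(hQ a).ne']
      ring
    simp only [key]
    rw [Finset.sum_add_distrib, Finset.sum_sub_distrib, ← Finset.mul_sum, hPsum, hQsum]
    ring
  rw [hg_sum, hchi]
  constructor
  · -- lower bound
    obtain ⟨a₀, ha₀⟩ := Finite.exists_min (fun a => P a / Q a)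
    have hbdd : BddBelow (Set.range fun a => P a / Q a) := Finite.bddBelow_range _
    have hm_le : ∀ a, (⨅ a, P a / Q a) ≤ P a / Q a := fun a => ciInf_le hbdd a
    have hm_ge : P a₀ / Q a₀ ≤ ⨅ a, P a / Q a := le_ciInf ha₀
    have hm_pos : 0 < ⨅ a, P a / Q a := lt_of_lt_of_le (hr a₀) hm_ge
    exact jensen_lower f hf hf1 P Q hP hPsum hQ hQsum _ hm_pos
      (fun a => (le_div_iff₀ (hQ a)).mp (hm_le a))
  · -- upper bound
    have hbdd : BddAbove (Set.range fun a => P a / Q a) := Finite.bddAbove_range _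
    have hM_ge : ∀ a, P a / Q a ≤ ⨆ a, P a / Q a := fun a => le_ciSup hbdd a
    exact jensen_upper f hf hf1 P Q hP hPsum hQ hQsum _
      (fun a => by
        have := (div_le_iff₀ (hQ a)).mp (hM_ge a)
        linarith)
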